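/- Let γ ∈ (−1, 0) and define Φ(ζ) = ∫₀^∞ ρ^γ / (ρ − ζ) dρ for ζ ∈ ℂ \ [0, ∞). Then Φ(ζ) = Φ(−1) · Δ(ζ), where Δ is the branch of z ↦ z^γ on ℂ \ [0, ∞) that is positive on the negative real axis; consequently Φ is injective on ℂ \ [0, ∞). -/

import Mathlib

open MeasureTheory Complex

/-- `Φ(ζ) = ∫₀^∞ ρ^γ/(ρ - ζ) dρ` for `ζ ∈ ℂ \ [0,∞)`. -/
noncomputable def Phi (γ : ℝ) (ζ : ℂ) : ℂ :=
  ∫ ρ in Set.Ioi (0:ℝ), ((ρ ^ γ : ℝ) : ℂ) / ((ρ : ℂ) - ζ)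

section Aux
open Set Filter Topology


lemma aux_ne_zero {w : ℂ} (hw : w ∈ slitPlane) {t : ℝ} (ht : 0 ≤ t) : (t:ℂ) + w ≠ 0 := by
  intro h
  have hw' : w = -(t:ℂ) := by linear_combination h
  rcases hw with h1 | h2
  · rw [hw'] at h1; simp at h1; linarith
  · rw [hw'] at h2; simp at h2

lemma abs_add_sq (w : ℂ) (t : ℝ) :
    (‖(t:ℂ) + w‖)^2 = t^2 + 2*t*w.re + (‖w‖)^2 := by
  rw [← Complex.normSq_eq_norm_sq, ← Complex.normSq_eq_norm_sq]
  simp [Complex.normSq_apply]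
  ring

lemma lower_bound {w : ℂ} (hw : w ∈ slitPlane) :
    ∃ c > 0, ∀ t : ℝ, 0 ≤ t → c * (t + ‖w‖) ≤ ‖(t:ℂ) + w‖ := by
  have hw0 : w ≠ 0 := slitPlane_ne_zero hw
  have ha : 0 < ‖w‖ := norm_pos_iff.mpr hw0
  set a : ℝ := ‖w‖ with hadef
  set ε : ℝ := min 1 (1 + w.re / a) with hε
  have hre : -a < w.re := by
    rcases hw with h1 | h2
    · linarith [norm_nonneg w]
    · have := Complex.abs_re_lt_norm.2 h2
      cases' abs_lt.1 this with h _
      linarith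
  have hd : (-1:ℝ) < w.re / a := (lt_div_iff₀ ha).2 (by linarith)
  have hεpos : 0 < ε := lt_min one_pos (by linarith)
  have hε1 : ε ≤ 1 := min_le_left _ _
  have key : ∀ t : ℝ, 0 ≤ t → ε * (t^2 + a^2) ≤ (‖(t:ℂ)+w‖)^2 := by
    intro t ht
    rw [abs_add_sq]
    rcases le_or_gt 0 w.re with h | h
    · nlinarith [sq_nonneg t, mul_nonneg (mul_nonneg ht ht) h, mul_nonneg ht h]
    · set q : ℝ := -w.re / a with hq
      have hq0 : 0 ≤ q := div_nonneg (by linarith) ha.le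
      have hqa : q * a = -w.re := div_mul_cancel₀ _ ha.ne'
      have hεq : ε + q ≤ 1 := by
        have h2 : ε ≤ 1 + w.re / a := min_le_right _ _
        have : q = -(w.re / a) := by rw [hq, neg_div]
        linarith
      nlinarith [mul_nonneg hq0 (sq_nonneg (t - a)),
        mul_nonneg (by linarith : (0:ℝ) ≤ 1 - ε - q) (sq_nonneg t),
        mul_nonneg (by linarith : (0:ℝ) ≤ 1 - ε - q) (sq_nonneg a), hqa]
  refine ⟨Real.sqrt ε / 2, by positivity, fun t ht => ?_⟩
  have h1 : Real.sqrt ε * Real.sqrt (t^2 + a^2) ≤ ‖(t:ℂ)+w‖ := by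
    rw [← Real.sqrt_mul hεpos.le]
    exact Real.sqrt_le_sqrt (key t ht) |>.trans_eq (Real.sqrt_sq (norm_nonneg _))
  have h2 : (t + a) / 2 ≤ Real.sqrt (t^2 + a^2) := by
    rw [div_le_iff₀ (by norm_num : (0:ℝ) < 2)]
    have := Real.sq_sqrt (by positivity : (0:ℝ) ≤ t^2 + a^2)
    nlinarith [Real.sqrt_nonneg (t^2 + a^2), sq_nonneg (t - a), ht, ha.le]
  calc Real.sqrt ε / 2 * (t + a) = Real.sqrt ε * ((t + a)/2) := by ring
  _ ≤ Real.sqrt ε * Real.sqrt (t^2 + a^2) :=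
      mul_le_mul_of_nonneg_left h2 (Real.sqrt_nonneg _)
  _ ≤ _ := h1

lemma loc_bound {w₀ : ℂ} (hw : w₀ ∈ slitPlane) :
    ∃ δ > 0, ∃ r > 0, ∀ w ∈ Metric.closedBall w₀ r, ∀ t : ℝ, 0 ≤ t →
      δ * (t + 1) ≤ ‖(t:ℂ) + w‖ := by
  obtain ⟨c, hc, hb⟩ := lower_bound hw
  have ha : 0 < ‖w₀‖ := norm_pos_iff.mpr (slitPlane_ne_zero hw)
  refine ⟨min c (c * ‖w₀‖ / 2) / 2, by positivity, c * ‖w₀‖ / 4, by positivity,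
    fun w hwball t ht => ?_⟩
  have h1 : ‖(t:ℂ) + w₀‖ ≤ ‖(t:ℂ) + w‖ + ‖w₀ - w‖ := by
    have := norm_add_le ((t:ℂ) + w) (w₀ - w)
    have e : (t:ℂ) + w + (w₀ - w) = (t:ℂ) + w₀ := by ring
    rwa [e] at this
  have h2 : ‖w₀ - w‖ ≤ c * ‖w₀‖ / 4 := by
    rw [← norm_sub_rev]
    simpa [Metric.mem_closedBall, Complex.dist_eq] using hwball
  have h3 := hb t ht
  have hm : min c (c * ‖w₀‖ / 2) ≤ c := min_le_left _ _
  have hm2 : min c (c * ‖w₀‖ / 2) ≤ c * ‖w₀‖ / 2 := min_le_right _ _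
  nlinarith [ht, mul_nonneg hc.le ht]



lemma base_integrable {γ : ℝ} (hγ1 : -1 < γ) (hγ2 : γ < 0) :
    IntegrableOn (fun t : ℝ => t ^ γ / (t+1)) (Ioi 0) := by
  have hcont : ContinuousOn (fun t : ℝ => t ^ γ / (t+1)) (Ioi 0) := by
    apply ContinuousOn.div
    · exact continuousOn_id.rpow_const (fun x hx => Or.inl (ne_of_gt hx))
    · exact (continuousOn_id.add continuousOn_const)
    · intro x hx; simp at hx ⊢; linarith
  have hIoi : Ioc (0:ℝ) 1 ∪ Ioi 1 = Ioi 0 := Ioc_union_Ioi_eq_Ioi zero_le_one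
  rw [← hIoi]
  apply IntegrableOn.union
  · have h1 : IntegrableOn (fun t : ℝ => t ^ γ) (Ioc 0 1) := by
      have := intervalIntegral.intervalIntegrable_rpow' (a := 0) (b := 1) hγ1
      rwa [intervalIntegrable_iff_integrableOn_Ioc_of_le zero_le_one] at this
    apply Integrable.mono h1
    · exact (hcont.mono (Ioc_subset_Ioi_self)).aestronglyMeasurable measurableSet_Ioc
    · rw [ae_restrict_iff' measurableSet_Ioc]
      filter_upwards with t ht
      have ht0 : 0 < t := ht.1
      have h : 0 < t ^ γ := Real.rpow_pos_of_pos ht0 γ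
      rw [Real.norm_eq_abs, Real.norm_eq_abs, abs_of_pos h, abs_of_pos (by positivity)]
      rw [div_le_iff₀ (by linarith)]
      nlinarith
  · have h1 : IntegrableOn (fun t : ℝ => t ^ (γ-1)) (Ioi 1) :=
      integrableOn_Ioi_rpow_of_lt (by linarith) one_pos
    apply Integrable.mono h1
    · exact (hcont.mono (Ioi_subset_Ioi zero_le_one)).aestronglyMeasurable measurableSet_Ioi
    · rw [ae_restrict_iff' measurableSet_Ioi]
      filter_upwards with t ht
      simp only [mem_Ioi] at ht
      have ht0 : (0:ℝ) < t := by linarith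
      have h : 0 < t ^ γ := Real.rpow_pos_of_pos ht0 γ
      rw [Real.norm_eq_abs, Real.norm_eq_abs, abs_of_pos (by positivity),
        abs_of_pos (Real.rpow_pos_of_pos ht0 _), Real.rpow_sub_one ht0.ne']
      apply div_le_div_of_nonneg_left h.le ht0
      linarith

lemma cont_f1 {γ : ℝ} {w : ℂ} (hw : w ∈ slitPlane) :
    ContinuousOn (fun t : ℝ => (↑(t^γ):ℂ)/((t:ℂ)+w)) (Ioi 0) := by
  apply ContinuousOn.div
  · exact continuous_ofReal.comp_continuousOn
      (continuousOn_id.rpow_const (fun x hx => Or.inl (ne_of_gt hx)))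
  · exact (continuous_ofReal.continuousOn.add continuousOn_const)
  · exact fun x hx => aux_ne_zero hw (le_of_lt hx)

lemma cont_f2 {γ : ℝ} {w : ℂ} (hw : w ∈ slitPlane) :
    ContinuousOn (fun t : ℝ => (↑(t^γ):ℂ)/((t:ℂ)+w)^2) (Ioi 0) := by
  apply ContinuousOn.div
  · exact continuous_ofReal.comp_continuousOn
      (continuousOn_id.rpow_const (fun x hx => Or.inl (ne_of_gt hx)))
  · exact ((continuous_ofReal.continuousOn.add continuousOn_const).pow 2)
  · exact fun x hx => pow_ne_zero 2 (aux_ne_zero hw (le_of_lt hx))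

lemma norm_f1 {γ : ℝ} (t : ℝ) (w : ℂ) (ht : 0 < t) :
    ‖(↑(t^γ):ℂ)/((t:ℂ)+w)‖ = t^γ / ‖(t:ℂ)+w‖ := by
  rw [norm_div, Complex.norm_real, Real.norm_eq_abs,
    abs_of_pos (Real.rpow_pos_of_pos ht γ)]

lemma int_f1 {γ : ℝ} (hγ1 : -1 < γ) (hγ2 : γ < 0) {w : ℂ} (hw : w ∈ slitPlane) :
    IntegrableOn (fun t : ℝ => (↑(t^γ):ℂ)/((t:ℂ)+w)) (Ioi 0) := by
  obtain ⟨δ, hδ, r, hr, hb⟩ := loc_bound hw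
  apply Integrable.mono ((base_integrable hγ1 hγ2).const_mul δ⁻¹)
  · exact (cont_f1 hw).aestronglyMeasurable measurableSet_Ioi
  · rw [ae_restrict_iff' measurableSet_Ioi]
    filter_upwards with t ht
    simp only [mem_Ioi] at ht
    have hb' := hb w (Metric.mem_closedBall_self hr.le) t ht.le
    have habs : 0 < ‖(t:ℂ)+w‖ := lt_of_lt_of_le (by positivity) hb'
    rw [norm_f1 t w ht, Real.norm_eq_abs, _root_.abs_of_nonneg (by positivity)]
    rw [div_le_iff₀ habs]
    have h : t^γ/(t+1) * (δ * (t+1)) ≤ t^γ/(t+1) * ‖(t:ℂ)+w‖ := by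
      exact mul_le_mul_of_nonneg_left hb' (by positivity)
    calc t ^ γ = δ⁻¹ * (t^γ/(t+1)) * (δ * (t+1)) := by field_simp
    _ ≤ δ⁻¹ * (t^γ/(t+1) * ‖(t:ℂ)+w‖) := by
        rw [mul_assoc]; exact mul_le_mul_of_nonneg_left h (by positivity)
    _ = δ⁻¹ * (t^γ/(t+1)) * ‖(t:ℂ)+w‖ := by ring

lemma norm_f2 {γ : ℝ} (t : ℝ) (w : ℂ) (ht : 0 < t) :
    ‖(↑(t^γ):ℂ)/((t:ℂ)+w)^2‖ = t^γ / (‖(t:ℂ)+w‖)^2 := by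
  rw [norm_div, Complex.norm_real, Real.norm_eq_abs, norm_pow,
    _root_.abs_of_pos (Real.rpow_pos_of_pos ht γ)]

lemma int_f2_aux {γ : ℝ} (hγ1 : -1 < γ) (hγ2 : γ < 0) {w : ℂ} {δ r : ℝ} (hδ : 0 < δ)
    (hr : 0 < r)
    (hb : ∀ w' ∈ Metric.closedBall w r, ∀ t : ℝ, 0 ≤ t →
      δ * (t + 1) ≤ ‖(t:ℂ) + w'‖) (hw : w ∈ slitPlane) :
    IntegrableOn (fun t : ℝ => (↑(t^γ):ℂ)/((t:ℂ)+w)^2) (Ioi 0) := by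
  apply Integrable.mono ((base_integrable hγ1 hγ2).const_mul (δ⁻¹*δ⁻¹))
  · exact (cont_f2 hw).aestronglyMeasurable measurableSet_Ioi
  · rw [ae_restrict_iff' measurableSet_Ioi]
    filter_upwards with t ht
    simp only [mem_Ioi] at ht
    have hA := hb w (Metric.mem_closedBall_self hr.le) t ht.le
    have habs : 0 < ‖(t:ℂ)+w‖ := lt_of_lt_of_le (by positivity) hA
    have htγ : 0 < t ^ γ := Real.rpow_pos_of_pos ht γ
    rw [norm_f2 t w ht, Real.norm_eq_abs, _root_.abs_of_nonneg (by positivity),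
      div_le_iff₀ (by positivity)]
    have hA2 : (δ*(t+1))^2 ≤ (‖(t:ℂ)+w‖)^2 :=
      pow_le_pow_left₀ (by positivity) hA 2
    calc t ^ γ ≤ t ^ γ * (t+1) := by nlinarith
    _ = δ⁻¹*δ⁻¹*(t^γ/(t+1))*(δ*(t+1))^2 := by field_simp
    _ ≤ δ⁻¹*δ⁻¹*(t^γ/(t+1))*(‖(t:ℂ)+w‖)^2 := by gcongr

lemma int_f2 {γ : ℝ} (hγ1 : -1 < γ) (hγ2 : γ < 0) {w : ℂ} (hw : w ∈ slitPlane) :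
    IntegrableOn (fun t : ℝ => (↑(t^γ):ℂ)/((t:ℂ)+w)^2) (Ioi 0) := by
  obtain ⟨δ, hδ, r, hr, hb⟩ := loc_bound hw
  exact int_f2_aux hγ1 hγ2 hδ hr hb hw

lemma int_f3 {γ : ℝ} (hγ1 : -1 < γ) (hγ2 : γ < 0) {w : ℂ} (hw : w ∈ slitPlane) :
    IntegrableOn (fun t : ℝ => (↑(t^(γ+1)):ℂ)/((t:ℂ)+w)^2) (Ioi 0) := by
  obtain ⟨δ, hδ, r, hr, hb⟩ := loc_bound hw
  apply Integrable.mono ((base_integrable hγ1 hγ2).const_mul (δ⁻¹*δ⁻¹))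
  · apply ContinuousOn.aestronglyMeasurable _ measurableSet_Ioi
    apply ContinuousOn.div
    · exact continuous_ofReal.comp_continuousOn
        (continuousOn_id.rpow_const (fun x hx => Or.inl (ne_of_gt hx)))
    · exact ((continuous_ofReal.continuousOn.add continuousOn_const).pow 2)
    · exact fun x hx => pow_ne_zero 2 (aux_ne_zero hw (le_of_lt hx))
  · rw [ae_restrict_iff' measurableSet_Ioi]
    filter_upwards with t ht
    simp only [mem_Ioi] at ht
    have hA := hb w (Metric.mem_closedBall_self hr.le) t ht.le
    have habs : 0 < ‖(t:ℂ)+w‖ := lt_of_lt_of_le (by positivity) hA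
    have htγ : 0 < t ^ γ := Real.rpow_pos_of_pos ht γ
    rw [norm_f2 t w ht, Real.norm_eq_abs, _root_.abs_of_nonneg (by positivity),
      div_le_iff₀ (by positivity)]
    have hA2 : (δ*(t+1))^2 ≤ (‖(t:ℂ)+w‖)^2 :=
      pow_le_pow_left₀ (by positivity) hA 2
    have he : t ^ (γ+1) = t ^ γ * t := Real.rpow_add_one ht.ne' γ
    calc t ^ (γ+1) = t ^ γ * t := he
    _ ≤ t ^ γ * (t+1) := by nlinarith
    _ = δ⁻¹*δ⁻¹*(t^γ/(t+1))*(δ*(t+1))^2 := by field_simp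
    _ ≤ δ⁻¹*δ⁻¹*(t^γ/(t+1))*(‖(t:ℂ)+w‖)^2 := by gcongr



lemma hasDerivAt_ofReal_add (w : ℂ) (t : ℝ) :
    HasDerivAt (fun s : ℝ => (s:ℂ) + w) 1 t := by
  simpa using (Complex.ofRealCLM.hasDerivAt (x := t)).add_const w

lemma ftc {γ : ℝ} (hγ1 : -1 < γ) (hγ2 : γ < 0) {w : ℂ} (hw : w ∈ slitPlane) :
    (∫ t in Ioi (0:ℝ), (↑(t^γ):ℂ)/((t:ℂ)+w))
      = (1/((γ:ℂ)+1)) * ∫ t in Ioi (0:ℝ), (↑(t^(γ+1)):ℂ)/((t:ℂ)+w)^2 := by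
  obtain ⟨δ, hδ, r, hr, hb⟩ := loc_bound hw
  have hb' : ∀ t : ℝ, 0 ≤ t → δ * (t+1) ≤ ‖(t:ℂ)+w‖ :=
    fun t ht => hb w (Metric.mem_closedBall_self hr.le) t ht
  have hγ1' : (0:ℝ) < γ + 1 := by linarith
  have hc : ((γ:ℂ)+1) ≠ 0 := by
    have : ((γ+1:ℝ):ℂ) ≠ 0 := Complex.ofReal_ne_zero.mpr (by linarith)
    push_cast at this; exact this
  set F : ℝ → ℂ := fun t => (↑(t^(γ+1)):ℂ)/(((γ:ℂ)+1) * ((t:ℂ)+w)) with hF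
  set F' : ℝ → ℂ := fun t =>
    (↑(t^γ):ℂ)/((t:ℂ)+w) - (1/((γ:ℂ)+1)) * ((↑(t^(γ+1)):ℂ)/((t:ℂ)+w)^2) with hF'
  have hderiv : ∀ t ∈ Ioi (0:ℝ), HasDerivAt F (F' t) t := by
    intro t ht
    simp only [mem_Ioi] at ht
    have hne : (t:ℂ) + w ≠ 0 := aux_ne_zero hw ht.le
    have hu : HasDerivAt (fun s : ℝ => s^(γ+1)) ((γ+1)*t^γ) t := by
      have := Real.hasDerivAt_rpow_const (x := t) (p := γ+1) (Or.inl ht.ne')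
      simpa using this
    have hu' : HasDerivAt (fun s : ℝ => (↑(s^(γ+1)):ℂ)) (↑((γ+1)*t^γ)) t :=
      hu.ofReal_comp
    have hv : HasDerivAt (fun s : ℝ => ((γ:ℂ)+1) * ((s:ℂ)+w)) ((γ:ℂ)+1) t := by
      simpa using (hasDerivAt_ofReal_add w t).const_mul ((γ:ℂ)+1)
    have hdiv := hu'.div hv (by exact mul_ne_zero hc hne)
    refine hdiv.congr_deriv ?_
    have hrw : (t:ℝ)^(γ+1) = t^γ * t := Real.rpow_add_one ht.ne' γ
    rw [hF']
    simp only []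
    rw [hrw]
    push_cast
    field_simp
  have hcont : ContinuousWithinAt F (Ici (0:ℝ)) 0 := by
    apply ContinuousAt.continuousWithinAt
    apply ContinuousAt.div
    · exact continuous_ofReal.continuousAt.comp
        (Real.continuousAt_rpow_const 0 (γ+1) (Or.inr hγ1'.le))
    · exact (continuous_const.mul (continuous_ofReal.add continuous_const)).continuousAt
    · simpa using mul_ne_zero hc (aux_ne_zero hw (le_refl (0:ℝ)))
  have htend : Tendsto F atTop (𝓝 0) := by
    rw [tendsto_zero_iff_norm_tendsto_zero]
    have hg : Tendsto (fun t : ℝ => ((γ+1)*δ)⁻¹ * t^γ) atTop (𝓝 0) := by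
      have := (tendsto_rpow_neg_atTop (y := -γ) (by linarith)).const_mul ((γ+1)*δ)⁻¹
      simpa using this
    apply squeeze_zero' (Eventually.of_forall (fun t => norm_nonneg _)) _ hg
    filter_upwards [eventually_gt_atTop (0:ℝ)] with t ht
    have hb2 := hb' t ht.le
    have habs : 0 < ‖(t:ℂ)+w‖ := lt_of_lt_of_le (by positivity) hb2
    have htγ1 : 0 < t ^ (γ+1) := Real.rpow_pos_of_pos ht _
    rw [hF]
    simp only [norm_div, norm_mul, Complex.norm_real, Real.norm_eq_abs,
      _root_.abs_of_pos htγ1]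
    have h1 : ‖((γ:ℂ)+1)‖ = γ + 1 := by
      have : ((γ:ℂ)+1) = ((γ+1 : ℝ) : ℂ) := by push_cast; ring
      rw [this, Complex.norm_real, Real.norm_eq_abs, _root_.abs_of_pos hγ1']
    rw [h1]
    have h2 : (γ+1) * (δ * t) ≤ (γ+1) * ‖(t:ℂ)+w‖ := by
      apply mul_le_mul_of_nonneg_left _ hγ1'.le
      calc δ * t ≤ δ * (t+1) := by nlinarith
      _ ≤ ‖(t:ℂ)+w‖ := hb2
    have h3 : (0:ℝ) < (γ+1) * (δ * t) := by positivity
    calc t^(γ+1) / ((γ+1) * ‖(t:ℂ)+w‖) ≤ t^(γ+1) / ((γ+1) * (δ * t)) := by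
          apply div_le_div_of_nonneg_left htγ1.le h3 h2
    _ = ((γ+1)*δ)⁻¹ * t^γ := by
        rw [Real.rpow_add_one ht.ne' γ]; field_simp
  have hint : IntegrableOn F' (Ioi 0) :=
    (int_f1 hγ1 hγ2 hw).sub ((int_f3 hγ1 hγ2 hw).const_mul _)
  have := integral_Ioi_of_hasDerivAt_of_tendsto hcont hderiv hint htend
  have hF0 : F 0 = 0 := by
    rw [hF]; simp [Real.zero_rpow (by linarith : γ + 1 ≠ 0)]
  rw [hF0, sub_zero] at this
  have hsplit : ∫ t in Ioi (0:ℝ), F' t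
      = (∫ t in Ioi (0:ℝ), (↑(t^γ):ℂ)/((t:ℂ)+w))
        - (1/((γ:ℂ)+1)) * ∫ t in Ioi (0:ℝ), (↑(t^(γ+1)):ℂ)/((t:ℂ)+w)^2 := by
    rw [hF']
    rw [integral_sub (int_f1 hγ1 hγ2 hw) ((int_f3 hγ1 hγ2 hw).const_mul _),
      integral_const_mul]
  rw [hsplit] at this
  linear_combination this

lemma keyODE {γ : ℝ} (hγ1 : -1 < γ) (hγ2 : γ < 0) {w : ℂ} (hw : w ∈ slitPlane) :
    w * (∫ t in Ioi (0:ℝ), (↑(t^γ):ℂ)/((t:ℂ)+w)^2)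
      = -(γ:ℂ) * ∫ t in Ioi (0:ℝ), (↑(t^γ):ℂ)/((t:ℂ)+w) := by
  have hc : ((γ:ℂ)+1) ≠ 0 := by
    have : ((γ+1:ℝ):ℂ) ≠ 0 := Complex.ofReal_ne_zero.mpr (by linarith)
    push_cast at this; exact this
  have hpoint : ∀ t ∈ Ioi (0:ℝ), (↑(t^(γ+1)):ℂ)/((t:ℂ)+w)^2
      = (↑(t^γ):ℂ)/((t:ℂ)+w) - w * ((↑(t^γ):ℂ)/((t:ℂ)+w)^2) := by
    intro t ht
    simp only [mem_Ioi] at ht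
    have hne : (t:ℂ) + w ≠ 0 := aux_ne_zero hw ht.le
    rw [Real.rpow_add_one ht.ne' γ]
    push_cast
    field_simp
    ring
  have h3 : (∫ t in Ioi (0:ℝ), (↑(t^(γ+1)):ℂ)/((t:ℂ)+w)^2)
      = (∫ t in Ioi (0:ℝ), (↑(t^γ):ℂ)/((t:ℂ)+w))
        - w * ∫ t in Ioi (0:ℝ), (↑(t^γ):ℂ)/((t:ℂ)+w)^2 := by
    rw [setIntegral_congr_fun measurableSet_Ioi hpoint,
      integral_sub (int_f1 hγ1 hγ2 hw) ((int_f2 hγ1 hγ2 hw).const_mul _),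
      integral_const_mul]
  have h4 := ftc hγ1 hγ2 hw
  rw [h3] at h4
  field_simp at h4
  linear_combination h4



lemma f2_bound {γ δ t : ℝ} {w : ℂ} (hδ : 0 < δ) (ht : 0 < t)
    (hA : δ * (t+1) ≤ ‖(t:ℂ)+w‖) :
    t^γ / (‖(t:ℂ)+w‖)^2 ≤ δ⁻¹*δ⁻¹*(t^γ/(t+1)) := by
  have habs : 0 < ‖(t:ℂ)+w‖ := lt_of_lt_of_le (by positivity) hA
  have htγ : 0 < t ^ γ := Real.rpow_pos_of_pos ht γ
  rw [div_le_iff₀ (by positivity)]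
  have hA2 : (δ*(t+1))^2 ≤ (‖(t:ℂ)+w‖)^2 :=
    pow_le_pow_left₀ (by positivity) hA 2
  calc t ^ γ ≤ t ^ γ * (t+1) := by nlinarith
  _ = δ⁻¹*δ⁻¹*(t^γ/(t+1))*(δ*(t+1))^2 := by field_simp
  _ ≤ δ⁻¹*δ⁻¹*(t^γ/(t+1))*(‖(t:ℂ)+w‖)^2 := by gcongr

lemma expθ_slit {θ : ℝ} (hθ : θ ∈ Ioo (-Real.pi) Real.pi) :
    Complex.exp ((θ:ℂ) * I) ∈ slitPlane := by
  rw [Complex.mem_slitPlane_iff]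
  by_cases h : Real.sin θ = 0
  · left
    have : θ = 0 := (Real.sin_eq_zero_iff_of_lt_of_lt hθ.1 hθ.2).1 h
    simp [this]
  · right
    rw [Complex.exp_ofReal_mul_I_im]
    exact h

lemma circle_deriv (θ : ℝ) :
    HasDerivAt (fun θ : ℝ => Complex.exp ((θ:ℂ) * I)) (Complex.exp ((θ:ℂ) * I) * I) θ := by
  simpa using ((Complex.ofRealCLM.hasDerivAt (x := θ)).mul_const I).cexp

lemma circle_lip : LipschitzWith 1 (fun θ : ℝ => Complex.exp ((θ:ℂ) * I)) := by
  apply lipschitzWith_of_nnnorm_deriv_le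
  · exact fun θ => (circle_deriv θ).differentiableAt
  · intro θ
    rw [(circle_deriv θ).deriv]
    simp [nnnorm_mul]

lemma gderiv {γ : ℝ} (hγ1 : -1 < γ) (hγ2 : γ < 0) {θ₀ : ℝ}
    (hθ : θ₀ ∈ Ioo (-Real.pi) Real.pi) :
    HasDerivAt (fun θ : ℝ => ∫ t in Ioi (0:ℝ), (↑(t^γ):ℂ)/((t:ℂ)+Complex.exp ((θ:ℂ)*I)))
      (I * γ * ∫ t in Ioi (0:ℝ), (↑(t^γ):ℂ)/((t:ℂ)+Complex.exp ((θ₀:ℂ)*I))) θ₀ := by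
  set w₀ : ℂ := Complex.exp ((θ₀:ℂ)*I) with hw₀def
  have hw₀ : w₀ ∈ slitPlane := expθ_slit hθ
  obtain ⟨δ, hδ, r, hr, hb⟩ := loc_bound hw₀
  have hmem : ∀ θ ∈ Metric.ball θ₀ r, Complex.exp ((θ:ℂ)*I) ∈ Metric.closedBall w₀ r := by
    intro θ hθ'
    rw [Metric.mem_closedBall]
    calc dist (Complex.exp ((θ:ℂ)*I)) w₀ ≤ 1 * dist θ θ₀ := circle_lip.dist_le_mul θ θ₀
    _ ≤ r := by rw [one_mul]; exact le_of_lt (Metric.mem_ball.1 hθ')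
  have hne : ∀ θ ∈ Metric.ball θ₀ r, ∀ t : ℝ, 0 < t → (t:ℂ) + Complex.exp ((θ:ℂ)*I) ≠ 0 := by
    intro θ hθ' t ht h
    have := hb _ (hmem θ hθ') t ht.le
    rw [h] at this
    simp at this
    nlinarith
  have hF'_def : ∀ θ : ℝ, ∀ t : ℝ,
      (-(I * Complex.exp ((θ:ℂ)*I))) * ((↑(t^γ):ℂ)/((t:ℂ)+Complex.exp ((θ:ℂ)*I))^2)
        = (-(I * Complex.exp ((θ:ℂ)*I))) * ((↑(t^γ):ℂ)/((t:ℂ)+Complex.exp ((θ:ℂ)*I))^2) :=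
    fun _ _ => rfl
  have key := hasDerivAt_integral_of_dominated_loc_of_deriv_le (μ := volume.restrict (Ioi 0))
    (x₀ := θ₀)
    (F := fun (θ : ℝ) t => (↑(t^γ):ℂ)/((t:ℂ)+Complex.exp ((θ:ℂ)*I)))
    (F' := fun (θ : ℝ) t => (-(I * Complex.exp ((θ:ℂ)*I))) * ((↑(t^γ):ℂ)/((t:ℂ)+Complex.exp ((θ:ℂ)*I))^2))
    (bound := fun t => δ⁻¹*δ⁻¹*(t^γ/(t+1))) (Metric.ball_mem_nhds θ₀ hr) ?_ ?_ ?_ ?_ ?_ ?_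
  · obtain ⟨hint, hder⟩ := key
    have hIeq : (∫ t in Ioi (0:ℝ),
        (-(I * w₀)) * ((↑(t^γ):ℂ)/((t:ℂ)+w₀)^2))
        = I * γ * ∫ t in Ioi (0:ℝ), (↑(t^γ):ℂ)/((t:ℂ)+w₀) := by
      rw [integral_const_mul]
      have hk := keyODE hγ1 hγ2 hw₀
      linear_combination -I * hk
    rwa [hIeq] at hder
  · filter_upwards [Metric.ball_mem_nhds θ₀ hr] with θ hθ'
    apply ContinuousOn.aestronglyMeasurable _ measurableSet_Ioi
    apply ContinuousOn.div
    · exact continuous_ofReal.comp_continuousOn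
        (continuousOn_id.rpow_const (fun x hx => Or.inl (ne_of_gt hx)))
    · exact (continuous_ofReal.continuousOn.add continuousOn_const)
    · exact fun x hx => hne θ hθ' x hx
  · exact int_f1 hγ1 hγ2 hw₀
  · apply ContinuousOn.aestronglyMeasurable _ measurableSet_Ioi
    apply continuousOn_const.mul
    apply ContinuousOn.div
    · exact continuous_ofReal.comp_continuousOn
        (continuousOn_id.rpow_const (fun x hx => Or.inl (ne_of_gt hx)))
    · exact ((continuous_ofReal.continuousOn.add continuousOn_const).pow 2)
    · exact fun x hx => pow_ne_zero 2 (hne θ₀ (Metric.mem_ball_self hr) x hx)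
  · rw [ae_restrict_iff' measurableSet_Ioi]
    filter_upwards with t ht
    intro θ hθ'
    simp only [mem_Ioi] at ht
    have h1 : ‖(-(I * Complex.exp ((θ:ℂ)*I))) *
        ((↑(t^γ):ℂ)/((t:ℂ)+Complex.exp ((θ:ℂ)*I))^2)‖
        = t^γ / (‖(t:ℂ)+Complex.exp ((θ:ℂ)*I)‖)^2 := by
      rw [norm_mul, norm_neg, norm_mul, Complex.norm_I, one_mul]
      rw [norm_f2 t _ ht]
      have : ‖Complex.exp ((θ:ℂ)*I)‖ = 1 := by
        simpa using Complex.norm_exp_ofReal_mul_I θ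
      rw [this, one_mul]
    rw [h1]
    exact f2_bound hδ ht (hb _ (hmem θ hθ') t ht.le)
  · exact (base_integrable hγ1 hγ2).const_mul _
  · rw [ae_restrict_iff' measurableSet_Ioi]
    filter_upwards with t ht
    intro θ hθ'
    simp only [mem_Ioi] at ht
    have hv : HasDerivAt (fun θ : ℝ => (t:ℂ) + Complex.exp ((θ:ℂ)*I))
        (Complex.exp ((θ:ℂ)*I) * I) θ := (circle_deriv θ).const_add (t:ℂ)
    have hnev := hne θ hθ' t ht
    have hdiv := (hasDerivAt_const θ ((↑(t^γ):ℂ))).div hv hnev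
    refine hdiv.congr_deriv ?_
    field_simp
    ring

lemma g_eq {γ : ℝ} (hγ1 : -1 < γ) (hγ2 : γ < 0) {θ : ℝ}
    (hθ : θ ∈ Ioo (-Real.pi) Real.pi) :
    (∫ t in Ioi (0:ℝ), (↑(t^γ):ℂ)/((t:ℂ)+Complex.exp ((θ:ℂ)*I)))
      = Complex.exp (I*γ*θ) * ∫ t in Ioi (0:ℝ), (↑(t^γ):ℂ)/((t:ℂ)+1) := by
  set g : ℝ → ℂ := fun θ => ∫ t in Ioi (0:ℝ), (↑(t^γ):ℂ)/((t:ℂ)+Complex.exp ((θ:ℂ)*I))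
    with hg
  set h : ℝ → ℂ := fun θ => Complex.exp (-(I*γ*θ)) * g θ with hh
  have hder : ∀ θ' ∈ Ioo (-Real.pi) Real.pi, HasDerivAt h 0 θ' := by
    intro θ' hθ'
    have he : HasDerivAt (fun θ : ℝ => Complex.exp (-(I*γ*θ)))
        (Complex.exp (-(I*γ*θ')) * (-(I*γ))) θ' := by
      have hlin : HasDerivAt (fun θ : ℝ => -(I*(γ:ℂ)*θ)) (-(I*γ)) θ' := by
        simpa using ((Complex.ofRealCLM.hasDerivAt (x := θ')).const_mul (-(I*(γ:ℂ))))
      exact hlin.cexp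
    have hgd := gderiv hγ1 hγ2 hθ'
    have := he.mul hgd
    refine this.congr_deriv ?_
    ring
  have h0 : (0:ℝ) ∈ Ioo (-Real.pi) Real.pi :=
    ⟨by linarith [Real.pi_pos], Real.pi_pos⟩
  have hconst : h θ = h 0 := by
    apply Convex.is_const_of_fderivWithin_eq_zero (convex_Ioo _ _)
      (fun x hx => (hder x hx).differentiableAt.differentiableWithinAt)
      (fun x hx => ?_) hθ h0
    rw [fderivWithin_of_isOpen isOpen_Ioo hx]
    have := (hder x hx).hasFDerivAt.fderiv
    rw [this]
    ext y
    simp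
  have h00 : h 0 = g 0 := by
    rw [hh]; simp
  have hg0 : g 0 = ∫ t in Ioi (0:ℝ), (↑(t^γ):ℂ)/((t:ℂ)+1) := by
    rw [hg]; simp
  have : Complex.exp (-(I*γ*θ)) * g θ = g 0 := by
    rw [← h00, ← hconst, hh]
  have step1 : g θ = Complex.exp (I*γ*θ) * (Complex.exp (-(I*γ*θ)) * g θ) := by
    rw [← mul_assoc, ← Complex.exp_add]
    simp
  show g θ = _
  rw [step1, this, hg0]



lemma arg_mem_Ioo {w : ℂ} (hw : w ∈ slitPlane) :
    Complex.arg w ∈ Ioo (-Real.pi) Real.pi :=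
  ⟨Complex.neg_pi_lt_arg w, lt_of_le_of_ne (Complex.arg_le_pi w) (slitPlane_arg_ne_pi hw)⟩

lemma cpow_eq {γ : ℝ} {w : ℂ} (hw : w ∈ slitPlane) :
    w ^ (γ:ℂ) = (↑((‖w‖) ^ γ) : ℂ) * Complex.exp (I*γ*(Complex.arg w)) := by
  have hne : w ≠ 0 := slitPlane_ne_zero hw
  have ha : 0 < ‖w‖ := norm_pos_iff.mpr hne
  have hlog : Complex.log w = ↑(Real.log (‖w‖)) + ↑(Complex.arg w)*I := rfl
  rw [Complex.cpow_def_of_ne_zero hne, hlog]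
  rw [show (↑(Real.log (‖w‖)) + ↑(Complex.arg w)*I) * (γ:ℂ)
      = ↑(Real.log (‖w‖) * γ) + I*γ*(Complex.arg w) by push_cast; ring]
  rw [Complex.exp_add, Real.rpow_def_of_pos ha, Complex.ofReal_exp]

lemma scaling {γ : ℝ} (hγ1 : -1 < γ) (hγ2 : γ < 0) {w : ℂ} (hw : w ∈ slitPlane) :
    (∫ t in Ioi (0:ℝ), (↑(t^γ):ℂ)/((t:ℂ)+w))
      = w ^ (γ:ℂ) * ∫ t in Ioi (0:ℝ), (↑(t^γ):ℂ)/((t:ℂ)+1) := by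
  have hne : w ≠ 0 := slitPlane_ne_zero hw
  have ha : 0 < ‖w‖ := norm_pos_iff.mpr hne
  set a : ℝ := ‖w‖ with hadef
  set θ : ℝ := Complex.arg w with hθdef
  have hθ : θ ∈ Ioo (-Real.pi) Real.pi := arg_mem_Ioo hw
  have hwe : w = ↑a * Complex.exp ((θ:ℂ)*I) := (Complex.norm_mul_exp_arg_mul_I w).symm
  have hslit : Complex.exp ((θ:ℂ)*I) ∈ slitPlane := expθ_slit hθ
  have hcv := integral_comp_mul_left_Ioi
    (g := fun t : ℝ => (↑(t^γ):ℂ)/((t:ℂ)+w)) (a := 0) (b := a) ha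
  rw [mul_zero] at hcv
  have hpt : ∀ x ∈ Ioi (0:ℝ),
      (↑((a*x)^γ):ℂ)/((↑(a*x):ℂ)+w)
        = ((↑(a^γ):ℂ)/(↑a)) * ((↑(x^γ):ℂ)/((x:ℂ)+Complex.exp ((θ:ℂ)*I))) := by
    intro x hx
    simp only [mem_Ioi] at hx
    have hxne : (x:ℂ) + Complex.exp ((θ:ℂ)*I) ≠ 0 := aux_ne_zero hslit hx.le
    have hane : (↑a:ℂ) ≠ 0 := Complex.ofReal_ne_zero.mpr ha.ne'
    rw [Real.mul_rpow ha.le hx.le]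
    rw [hwe]
    push_cast
    rw [div_mul_div_comm]
    congr 1
    ring
  have hleft : (∫ x in Ioi (0:ℝ), (↑((a*x)^γ):ℂ)/((↑(a*x):ℂ)+w))
      = ((↑(a^γ):ℂ)/(↑a)) * ∫ x in Ioi (0:ℝ), (↑(x^γ):ℂ)/((x:ℂ)+Complex.exp ((θ:ℂ)*I)) := by
    rw [setIntegral_congr_fun measurableSet_Ioi hpt, integral_const_mul]
  have hcv' : (∫ x in Ioi (0:ℝ), (↑((a*x)^γ):ℂ)/((↑(a*x):ℂ)+w))
      = a⁻¹ • ∫ t in Ioi (0:ℝ), (↑(t^γ):ℂ)/((t:ℂ)+w) := by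
    convert hcv using 2
  rw [hleft] at hcv'
  have haC : (↑a:ℂ) ≠ 0 := Complex.ofReal_ne_zero.mpr ha.ne'
  rw [Complex.real_smul, Complex.ofReal_inv] at hcv'
  have hIw : (∫ t in Ioi (0:ℝ), (↑(t^γ):ℂ)/((t:ℂ)+w))
      = (↑(a^γ):ℂ) * ∫ x in Ioi (0:ℝ), (↑(x^γ):ℂ)/((x:ℂ)+Complex.exp ((θ:ℂ)*I)) := by
    field_simp at hcv'
    linear_combination -hcv'
  rw [hIw, g_eq hγ1 hγ2 hθ, cpow_eq hw]
  rw [← hadef, ← hθdef]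
  ring

lemma mem_slit_iff (ζ : ℂ) : (∀ r : ℝ, 0 ≤ r → ζ ≠ (r : ℂ)) ↔ -ζ ∈ slitPlane := by
  constructor
  · intro h
    by_contra hc
    rw [Complex.mem_slitPlane_iff] at hc
    push_neg at hc
    obtain ⟨h1, h2⟩ := hc
    simp only [Complex.neg_re, Complex.neg_im, neg_eq_zero] at h1 h2
    apply h ζ.re (by linarith)
    apply Complex.ext
    · simp
    · simpa using h2
  · intro h r hr hzr
    rw [hzr, Complex.mem_slitPlane_iff] at h
    rcases h with h | h
    · simp only [Complex.neg_re, Complex.ofReal_re] at h; linarith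
    · simp at h

lemma int_pos {γ : ℝ} (hγ1 : -1 < γ) (hγ2 : γ < 0) :
    0 < ∫ t in Ioi (0:ℝ), t ^ γ / (t+1) := by
  rw [setIntegral_pos_iff_support_of_nonneg_ae]
  · have hsub : Ioi (0:ℝ) ⊆ Function.support (fun t : ℝ => t ^ γ / (t+1)) ∩ Ioi 0 := by
      intro t ht
      simp only [mem_Ioi] at ht
      refine ⟨?_, ht⟩
      simp only [Function.mem_support]
      have : 0 < t ^ γ / (t+1) := by
        apply div_pos (Real.rpow_pos_of_pos ht γ); linarith
      exact this.ne'
    calc (0:ENNReal) < volume (Ioi (0:ℝ)) := by simp [Real.volume_Ioi]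
    _ ≤ _ := measure_mono hsub
  · filter_upwards [ae_restrict_mem measurableSet_Ioi] with t ht
    simp only [mem_Ioi] at ht
    have : (0:ℝ) < t ^ γ / (t+1) := by positivity
    exact this.le
  · exact base_integrable hγ1 hγ2

lemma int_real {γ : ℝ} :
    (∫ t in Ioi (0:ℝ), (↑(t^γ):ℂ)/((t:ℂ)+1)) = ((∫ t in Ioi (0:ℝ), t ^ γ / (t+1) : ℝ) : ℂ) := by
  have h1 : ∀ t ∈ Ioi (0:ℝ), (↑(t^γ):ℂ)/((t:ℂ)+1) = ((t^γ/(t+1) : ℝ) : ℂ) := by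
    intro t ht
    push_cast
    ring
  rw [setIntegral_congr_fun measurableSet_Ioi h1]
  exact integral_ofReal

lemma cpow_inj {γ : ℝ} (hγ1 : -1 < γ) (hγ2 : γ < 0) {z w : ℂ}
    (hz : z ∈ slitPlane) (hw : w ∈ slitPlane) (h : z ^ (γ:ℂ) = w ^ (γ:ℂ)) : z = w := by
  have hz0 : z ≠ 0 := slitPlane_ne_zero hz
  have hw0 : w ≠ 0 := slitPlane_ne_zero hw
  rw [Complex.cpow_def_of_ne_zero hz0, Complex.cpow_def_of_ne_zero hw0] at h
  obtain ⟨n, hn⟩ := Complex.exp_eq_exp_iff_exists_int.1 h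
  have hrw : ((n:ℂ))*(2*(Real.pi:ℂ)*I) = ((((n:ℝ))*(2*Real.pi) : ℝ) : ℂ)*I := by
    push_cast; ring
  rw [hrw] at hn
  have him := congrArg Complex.im hn
  simp only [Complex.add_im, Complex.mul_im, Complex.ofReal_re, Complex.ofReal_im,
    Complex.log_im, Complex.I_im, Complex.I_re, mul_zero, mul_one, zero_mul,
    add_zero, zero_add] at him
  have hargz := arg_mem_Ioo hz
  have hargw := arg_mem_Ioo hw
  have hπ := Real.pi_pos
  have him' : Complex.arg z * γ = Complex.arg w * γ + (n:ℝ) * (2*Real.pi) := by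
    linarith [him]
  have hn0 : n = 0 := by
    have habs : |(n:ℝ)| * (2*Real.pi) < 1 * (2*Real.pi) := by
      have h1 : (n:ℝ) * (2*Real.pi) = (Complex.arg z - Complex.arg w) * γ := by
        linarith [him']
      have h2 : |(n:ℝ) * (2*Real.pi)| = |Complex.arg z - Complex.arg w| * |γ| := by
        rw [h1, abs_mul]
      have h3 : |Complex.arg z - Complex.arg w| < 2*Real.pi := by
        rw [abs_lt]
        obtain ⟨hz1, hz2⟩ := hargz
        obtain ⟨hw1, hw2⟩ := hargw
        constructor <;> linarith
      have h4 : |γ| < 1 := by rw [abs_lt]; constructor <;> linarith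
      rw [abs_mul, _root_.abs_of_pos (by positivity : (0:ℝ) < 2*Real.pi)] at h2
      rw [h2, one_mul]
      calc |Complex.arg z - Complex.arg w| * |γ| ≤ (2*Real.pi) * |γ| := by
            apply mul_le_mul_of_nonneg_right h3.le (abs_nonneg _)
      _ < 2*Real.pi := by nlinarith [abs_nonneg γ]
    have habs' : |(n:ℝ)| < 1 := by
      have := (mul_lt_mul_iff_left₀ (by positivity : (0:ℝ) < 2*Real.pi)).1 habs
      linarith
    have h5 : -1 < (n:ℝ) ∧ (n:ℝ) < 1 := abs_lt.1 habs'
    have h6 : (-1:ℤ) < n ∧ n < 1 := by exact_mod_cast h5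
    omega
  rw [hn0] at hn
  simp only [Int.cast_zero, zero_mul, Complex.ofReal_zero, add_zero] at hn
  have hγ0 : ((γ:ℝ):ℂ) ≠ 0 := Complex.ofReal_ne_zero.mpr (by linarith)
  have hlog : Complex.log z = Complex.log w := mul_right_cancel₀ hγ0 hn
  rw [← Complex.exp_log hz0, ← Complex.exp_log hw0, hlog]


end Aux

open Set Filter Topology in
/-- For `γ ∈ (-1,0)`: `Φ(ζ) = Φ(-1)·Δ(ζ)` on `ℂ \ [0,∞)`, where
`Δ(ζ) = (-ζ)^γ` (principal power) is the branch of `z ↦ z^γ` positive on the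
negative real axis; consequently `Φ` is injective on `ℂ \ [0,∞)`. -/
theorem stmt_6 (γ : ℝ) (hγ : γ ∈ Set.Ioo (-1 : ℝ) 0) :
    (∀ ζ : ℂ, (∀ r : ℝ, 0 ≤ r → ζ ≠ (r : ℂ)) →
        Phi γ ζ = Phi γ (-1) * (-ζ) ^ (γ : ℂ)) ∧
      Set.InjOn (Phi γ) {ζ : ℂ | ∀ r : ℝ, 0 ≤ r → ζ ≠ (r : ℂ)} := by
  obtain ⟨hγ1, hγ2⟩ := hγ
  have hPhi : ∀ ζ : ℂ, Phi γ ζ = ∫ t in Ioi (0:ℝ), (↑(t^γ):ℂ)/((t:ℂ) + -ζ) := by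
    intro ζ
    unfold Phi
    simp only [sub_eq_add_neg]
  have hPhi1 : Phi γ (-1) = ∫ t in Ioi (0:ℝ), (↑(t^γ):ℂ)/((t:ℂ)+1) := by
    rw [hPhi]
    norm_num
  have main : ∀ ζ : ℂ, (∀ r : ℝ, 0 ≤ r → ζ ≠ (r : ℂ)) →
      Phi γ ζ = Phi γ (-1) * (-ζ) ^ (γ : ℂ) := by
    intro ζ hζ
    have hw : -ζ ∈ slitPlane := (mem_slit_iff ζ).1 hζ
    rw [hPhi, scaling hγ1 hγ2 hw, hPhi1]
    ring
  refine ⟨main, ?_⟩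
  intro ζ1 h1 ζ2 h2 heq
  simp only [mem_setOf_eq] at h1 h2
  have hw1 : -ζ1 ∈ slitPlane := (mem_slit_iff ζ1).1 h1
  have hw2 : -ζ2 ∈ slitPlane := (mem_slit_iff ζ2).1 h2
  have e1 := main ζ1 h1
  have e2 := main ζ2 h2
  rw [e1, e2] at heq
  have hPne : Phi γ (-1) ≠ 0 := by
    rw [hPhi1, int_real]
    exact Complex.ofReal_ne_zero.mpr (ne_of_gt (int_pos hγ1 hγ2))
  have hcp : (-ζ1) ^ (γ:ℂ) = (-ζ2) ^ (γ:ℂ) := mul_left_cancel₀ hPne heq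
  have := cpow_inj hγ1 hγ2 hw1 hw2 hcp
  exact neg_inj.1 this
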